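/- Let T be a tree with a (γ_t-τ)-set D. If T_i is obtained from T by one of the operations O_1–O_4, then T_i also has a (γ_t-τ)-set; explicitly: D ∪ {x,y} for O_1 with attached path (v,x,y,z), D for O_2, D ∪ {v} for O_3 with attached path (v,w), and D ∪ {v,y} for O_4 with attached path (x,v,y,z). -/

import Mathlib

open SimpleGraph

/-- `D` is a total dominating set of `G`: every vertex has a neighbor in `D`. -/
def IsTotalDomSet {V : Type*} (G : SimpleGraph V) (D : Finset V) : Prop :=
  ∀ v : V, ∃ u ∈ D, G.Adj v u

/-- `X` is a vertex cover of `G`: every edge has an endpoint in `X`. -/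
def IsVertexCover {V : Type*} (G : SimpleGraph V) (X : Finset V) : Prop :=
  ∀ ⦃a b : V⦄, G.Adj a b → a ∈ X ∨ b ∈ X

/-- The total domination number `γ_t(G)`. -/
noncomputable def gammaT {V : Type*} (G : SimpleGraph V) : ℕ :=
  sInf {n | ∃ D : Finset V, IsTotalDomSet G D ∧ D.card = n}

/-- The vertex cover number `τ(G)`. -/
noncomputable def tau {V : Type*} (G : SimpleGraph V) : ℕ :=
  sInf {n | ∃ X : Finset V, _root_.IsVertexCover G X ∧ X.card = n}

/-- A `(γ_t-τ)`-set: simultaneously a minimum total dominating set and a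
minimum vertex cover. -/
def IsGttSet {V : Type*} (G : SimpleGraph V) (D : Finset V) : Prop :=
  IsTotalDomSet G D ∧ _root_.IsVertexCover G D ∧ D.card = gammaT G ∧ D.card = tau G

/-- The sum `G +_{uv} H`: the disjoint union of `G` and `H` with the extra edge `uv`. -/
def graphSum {α β : Type*} (G : SimpleGraph α) (H : SimpleGraph β) (u : α) (v : β) :
    SimpleGraph (α ⊕ β) :=
  SimpleGraph.fromRel (fun x y =>
    (∃ a b, x = Sum.inl a ∧ y = Sum.inl b ∧ G.Adj a b) ∨
    (∃ a b, x = Sum.inr a ∧ y = Sum.inr b ∧ H.Adj a b) ∨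
    (x = Sum.inl u ∧ y = Sum.inr v))

/-- The private neighborhood `pn(u,S) = {w : N(w) ∩ S = {u}}`. -/
def pn {V : Type*} (G : SimpleGraph V) (S : Finset V) (u : V) : Set V :=
  {w | G.neighborSet w ∩ ↑S = {u}}

/-- `v` is quasi-isolated: for some minimum total dominating set `S` there is
`u ∈ S` with `pn(u,S) = {v}`. -/
def QuasiIsolated {V : Type*} (G : SimpleGraph V) (v : V) : Prop :=
  ∃ S : Finset V, IsTotalDomSet G S ∧ S.card = gammaT G ∧ ∃ u ∈ S, pn G S u = {v}

/-- An end vertex: a vertex of degree 1. -/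
def IsEndVertex {V : Type*} (G : SimpleGraph V) (v : V) : Prop :=
  (G.neighborSet v).ncard = 1

section Helpers

variable {α β : Type*} {G : SimpleGraph α} {H : SimpleGraph β} {u : α} {v : β}

lemma gs_ll {a b : α} : (graphSum G H u v).Adj (Sum.inl a) (Sum.inl b) ↔ G.Adj a b := by
  simp [graphSum, SimpleGraph.fromRel_adj]
  constructor
  · rintro ⟨hne, h | h⟩
    · exact h
    · exact h.symm
  · exact fun h => ⟨G.ne_of_adj h, Or.inl h⟩

lemma gs_rr {a b : β} : (graphSum G H u v).Adj (Sum.inr a) (Sum.inr b) ↔ H.Adj a b := by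
  simp [graphSum, SimpleGraph.fromRel_adj]
  constructor
  · rintro ⟨hne, h | h⟩
    · exact h
    · exact h.symm
  · exact fun h => ⟨H.ne_of_adj h, Or.inl h⟩

lemma gs_lr {a : α} {b : β} : (graphSum G H u v).Adj (Sum.inl a) (Sum.inr b) ↔ a = u ∧ b = v := by
  simp [graphSum, SimpleGraph.fromRel_adj]

lemma gs_rl {a : α} {b : β} : (graphSum G H u v).Adj (Sum.inr b) (Sum.inl a) ↔ a = u ∧ b = v := by
  rw [SimpleGraph.adj_comm]; exact gs_lr

/-- the minimum of a cardinality-min problem equals the card of a witness that is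
a lower bound for all solutions. -/
lemma sInf_card_eq {P : Finset α → Prop} {S : Finset α} (hS : P S)
    (h : ∀ X : Finset α, P X → S.card ≤ X.card) :
    sInf {n | ∃ X : Finset α, P X ∧ X.card = n} = S.card := by
  refine le_antisymm (Nat.sInf_le ⟨S, hS, rfl⟩) ?_
  obtain ⟨X, hX, hc⟩ := Nat.sInf_mem (⟨S.card, S, hS, rfl⟩ :
    Set.Nonempty {n | ∃ X : Finset α, P X ∧ X.card = n})
  exact hc ▸ h X hX

/-- restriction of a vertex cover of a graph sum to the left part. -/
lemma cover_toLeft {X : Finset (α ⊕ β)}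
    (hX : _root_.IsVertexCover (graphSum G H u v) X) : _root_.IsVertexCover G X.toLeft := by
  intro a b hab
  rcases hX (gs_ll.2 hab) with h | h
  · exact Or.inl (Finset.mem_toLeft.2 h)
  · exact Or.inr (Finset.mem_toLeft.2 h)

/-- each left vertex of a graph sum is dominated by a left vertex, or it is `u`
dominated by `inr v`. -/
lemma tds_left_dom {S : Finset (α ⊕ β)}
    (hS : IsTotalDomSet (graphSum G H u v) S) (w : α) :
    (∃ d ∈ S.toLeft, G.Adj w d) ∨ (w = u ∧ Sum.inr v ∈ S) := by
  obtain ⟨d, hd, hadj⟩ := hS (Sum.inl w)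
  cases d with
  | inl d => exact Or.inl ⟨d, Finset.mem_toLeft.2 hd, gs_ll.1 hadj⟩
  | inr d =>
      obtain ⟨h1, h2⟩ := gs_lr.1 hadj
      exact Or.inr ⟨h1, h2 ▸ hd⟩

/-- if `u` has a left dominator, the left part of a total dominating set of the
sum is a total dominating set of `G`. -/
lemma tds_toLeft {S : Finset (α ⊕ β)}
    (hS : IsTotalDomSet (graphSum G H u v) S)
    (hu : ∃ d ∈ S.toLeft, G.Adj u d) : IsTotalDomSet G S.toLeft := by
  intro w
  rcases tds_left_dom hS w with h | ⟨rfl, _⟩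
  · exact h
  · exact hu

/-- inserting a neighbor of `u` into the left part gives a total dominating set. -/
lemma tds_insert [DecidableEq α] {S : Finset (α ⊕ β)}
    (hS : IsTotalDomSet (graphSum G H u v) S) {t : α} (ht : G.Adj u t) :
    IsTotalDomSet G (insert t S.toLeft) := by
  intro w
  rcases tds_left_dom hS w with ⟨d, hd, hadj⟩ | ⟨rfl, _⟩
  · exact ⟨d, Finset.mem_insert_of_mem hd, hadj⟩
  · exact ⟨t, Finset.mem_insert_self _ _, ht⟩

/-- the key quasi-isolation argument: if a total dominating set of the sum gives
`u` no left dominator and its left part is too small, then `u` is quasi-isolated. -/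
lemma quasi_of [DecidableEq α] {S : Finset (α ⊕ β)} {D : Finset α} {t : α}
    (hS : IsTotalDomSet (graphSum G H u v) S)
    (hnol : ¬ ∃ d ∈ S.toLeft, G.Adj u d)
    (ht : G.Adj u t)
    (hg : D.card = gammaT G)
    (hgt : ∀ X : Finset α, IsTotalDomSet G X → D.card ≤ X.card)
    (hcard : S.toLeft.card + 1 ≤ D.card) :
    QuasiIsolated G u := by
  set S₀ : Finset α := insert t S.toLeft with hS₀
  have htds : IsTotalDomSet G S₀ := tds_insert hS ht
  have hle : S₀.card ≤ S.toLeft.card + 1 := Finset.card_insert_le _ _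
  have hcard₀ : S₀.card = D.card := le_antisymm (le_trans hle hcard) (hgt _ htds)
  have htnot : t ∉ S.toLeft := by
    intro hti
    have he : S₀ = S.toLeft := Finset.insert_eq_self.2 hti
    have := hgt _ htds
    rw [he] at this
    omega
  refine ⟨S₀, htds, hcard₀.trans hg, t, Finset.mem_insert_self _ _, ?_⟩
  ext w
  simp only [pn, Set.mem_setOf_eq, Set.mem_singleton_iff]
  constructor
  · intro hw
    by_contra hwu
    rcases tds_left_dom hS w with ⟨d, hd, hadj⟩ | ⟨rfl, _⟩
    · have hdmem : d ∈ G.neighborSet w ∩ ↑S₀ :=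
        ⟨hadj, Finset.mem_coe.2 (Finset.mem_insert_of_mem hd)⟩
      rw [hw] at hdmem
      exact htnot (hdmem ▸ hd)
    · exact hwu rfl
  · rintro rfl
    ext s
    simp only [Set.mem_inter_iff, SimpleGraph.mem_neighborSet, Finset.mem_coe,
      Set.mem_singleton_iff]
    constructor
    · rintro ⟨hadj, hsS⟩
      rcases Finset.mem_insert.1 hsS with rfl | hs
      · rfl
      · exact absurd ⟨s, hs, hadj⟩ hnol
    · rintro rfl
      exact ⟨ht, Finset.mem_insert_self _ _⟩

lemma card_split (S : Finset (α ⊕ β)) : S.card = S.toLeft.card + S.toRight.card :=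
  (Finset.card_toLeft_add_card_toRight).symm

end Helpers

/-- If `T` has a `(γ_t-τ)`-set `D`, then the tree obtained by each of the operations
`O_1`–`O_4` has a `(γ_t-τ)`-set, explicitly: `D ∪ {x,y}` for `O_1` (attached path
`(v,x,y,z)`), `D` for `O_2`, `D ∪ {v}` for `O_3` (attached path `(v,w)`), and
`D ∪ {v,y}` for `O_4` (attached path `(x,v,y,z)`). -/
theorem stmt16 {V : Type*} [DecidableEq V] (T : SimpleGraph V) (hT : T.IsTree)
    (D : Finset V) (hD : IsGttSet T D) :
    (∀ u ∈ D, IsGttSet (graphSum T (SimpleGraph.pathGraph 4) u 0)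
      (D.image Sum.inl ∪ {Sum.inr 1, Sum.inr 2})) ∧
    (∀ u ∈ D, IsGttSet (graphSum T (⊥ : SimpleGraph Unit) u ())
      (D.image Sum.inl)) ∧
    (∀ u ∈ D, ¬ QuasiIsolated T u →
      IsGttSet (graphSum T (SimpleGraph.pathGraph 2) u 0)
        (D.image Sum.inl ∪ {Sum.inr 0})) ∧
    (∀ u : V, ¬ QuasiIsolated T u →
      IsGttSet (graphSum T (SimpleGraph.pathGraph 4) u 1)
        (D.image Sum.inl ∪ {Sum.inr 1, Sum.inr 2})) := by
  obtain ⟨hTD, hVC, hg, htau⟩ := hD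
  have hgt : ∀ X : Finset V, IsTotalDomSet T X → D.card ≤ X.card := fun X hX =>
    le_trans (le_of_eq hg) (Nat.sInf_le ⟨X, hX, rfl⟩)
  have hct : ∀ X : Finset V, _root_.IsVertexCover T X → D.card ≤ X.card := fun X hX =>
    le_trans (le_of_eq htau) (Nat.sInf_le ⟨X, hX, rfl⟩)
  refine ⟨?_, ?_, ?_, ?_⟩
  -- O₁ : attach a path P₄ by its end to u ∈ D
  · intro u hu
    obtain ⟨t, htD, htu⟩ := hTD u
    have hcard' : ((D.image (Sum.inl : V → V ⊕ Fin 4)) ∪ {Sum.inr 1, Sum.inr 2}).card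
        = D.card + 2 := by
      rw [Finset.card_union_of_disjoint (by simp),
        Finset.card_image_of_injective _ Sum.inl_injective,
        Finset.card_pair (by simp)]
    have hTDS' : IsTotalDomSet (graphSum T (SimpleGraph.pathGraph 4) u 0)
        (D.image Sum.inl ∪ {Sum.inr 1, Sum.inr 2}) := by
      intro x
      cases x with
      | inl w =>
          obtain ⟨d, hd, hadj⟩ := hTD w
          exact ⟨Sum.inl d, by simp [hd], gs_ll.2 hadj⟩
      | inr w =>
          fin_cases w
          · exact ⟨Sum.inr 1, by simp, gs_rr.2 (by rw [SimpleGraph.pathGraph_adj]; decide)⟩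
          · exact ⟨Sum.inr 2, by simp, gs_rr.2 (by rw [SimpleGraph.pathGraph_adj]; decide)⟩
          · exact ⟨Sum.inr 1, by simp, gs_rr.2 (by rw [SimpleGraph.pathGraph_adj]; decide)⟩
          · exact ⟨Sum.inr 2, by simp, gs_rr.2 (by rw [SimpleGraph.pathGraph_adj]; decide)⟩
    have hVC' : _root_.IsVertexCover (graphSum T (SimpleGraph.pathGraph 4) u 0)
        (D.image Sum.inl ∪ {Sum.inr 1, Sum.inr 2}) := by
      rintro (a | a) (b | b) hab
      · rcases hVC (gs_ll.1 hab) with h | h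
        · exact Or.inl (by simp [h])
        · exact Or.inr (by simp [h])
      · obtain ⟨rfl, rfl⟩ := gs_lr.1 hab
        exact Or.inl (by simp [hu])
      · obtain ⟨rfl, rfl⟩ := gs_rl.1 hab
        exact Or.inr (by simp [hu])
      · have h := gs_rr.1 hab
        rw [SimpleGraph.pathGraph_adj] at h
        have h' : a = 1 ∨ a = 2 ∨ b = 1 ∨ b = 2 := by revert h; fin_cases a <;> fin_cases b <;> decide
        rcases h' with rfl | rfl | rfl | rfl
        · exact Or.inl (by simp)
        · exact Or.inl (by simp)
        · exact Or.inr (by simp)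
        · exact Or.inr (by simp)
    have hmin_t : ∀ X : Finset (V ⊕ Fin 4),
        IsTotalDomSet (graphSum T (SimpleGraph.pathGraph 4) u 0) X →
        ((D.image (Sum.inl : V → V ⊕ Fin 4)) ∪ {Sum.inr 1, Sum.inr 2}).card ≤ X.card := by
      intro X hX
      rw [hcard', card_split X]
      have f2 : (2 : Fin 4) ∈ X.toRight := by
        obtain ⟨d, hd, hadj⟩ := hX (Sum.inr 3)
        cases d with
        | inl d => exact absurd (gs_rl.1 hadj).2 (by decide)
        | inr d =>
            have h := gs_rr.1 hadj
            rw [SimpleGraph.pathGraph_adj] at h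
            have hd2 : d = 2 := by revert h; fin_cases d <;> decide
            exact Finset.mem_toRight.2 (hd2 ▸ hd)
      have f13 : (1 : Fin 4) ∈ X.toRight ∨ (3 : Fin 4) ∈ X.toRight := by
        obtain ⟨d, hd, hadj⟩ := hX (Sum.inr 2)
        cases d with
        | inl d => exact absurd (gs_rl.1 hadj).2 (by decide)
        | inr d =>
            have h := gs_rr.1 hadj
            rw [SimpleGraph.pathGraph_adj] at h
            have hd2 : d = 1 ∨ d = 3 := by revert h; fin_cases d <;> decide
            rcases hd2 with rfl | rfl
            · exact Or.inl (Finset.mem_toRight.2 hd)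
            · exact Or.inr (Finset.mem_toRight.2 hd)
      by_cases h0 : Sum.inr (0 : Fin 4) ∈ X
      · have h3 : 3 ≤ X.toRight.card := by
          rcases f13 with h1 | h1
          · have hsub : ({0, 1, 2} : Finset (Fin 4)) ⊆ X.toRight :=
              Finset.insert_subset_iff.2 ⟨Finset.mem_toRight.2 h0,
                Finset.insert_subset_iff.2 ⟨h1, Finset.singleton_subset_iff.2 f2⟩⟩
            calc 3 = ({0, 1, 2} : Finset (Fin 4)).card := by decide
              _ ≤ X.toRight.card := Finset.card_le_card hsub
          · have hsub : ({0, 2, 3} : Finset (Fin 4)) ⊆ X.toRight :=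
              Finset.insert_subset_iff.2 ⟨Finset.mem_toRight.2 h0,
                Finset.insert_subset_iff.2 ⟨f2, Finset.singleton_subset_iff.2 h1⟩⟩
            calc 3 = ({0, 2, 3} : Finset (Fin 4)).card := by decide
              _ ≤ X.toRight.card := Finset.card_le_card hsub
        have hl : D.card ≤ X.toLeft.card + 1 := by
          by_cases h : ∃ d ∈ X.toLeft, T.Adj u d
          · exact le_trans (hgt _ (tds_toLeft hX h)) (Nat.le_succ _)
          · exact le_trans (hgt _ (tds_insert hX htu)) (Finset.card_insert_le _ _)
        omega
      · have hl : ∃ d ∈ X.toLeft, T.Adj u d := by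
          rcases tds_left_dom hX u with h | ⟨_, hr⟩
          · exact h
          · exact absurd hr h0
        have h1 := hgt _ (tds_toLeft hX hl)
        have h2 : 2 ≤ X.toRight.card := by
          rcases f13 with hh | hh
          · exact Finset.one_lt_card.2 ⟨_, hh, _, f2, by decide⟩
          · exact Finset.one_lt_card.2 ⟨_, hh, _, f2, by decide⟩
        omega
    have hmin_c : ∀ X : Finset (V ⊕ Fin 4),
        _root_.IsVertexCover (graphSum T (SimpleGraph.pathGraph 4) u 0) X →
        ((D.image (Sum.inl : V → V ⊕ Fin 4)) ∪ {Sum.inr 1, Sum.inr 2}).card ≤ X.card := by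
      intro X hX
      rw [hcard', card_split X]
      have h1 := hct _ (cover_toLeft hX)
      have e01 := hX (gs_rr.2 (show (SimpleGraph.pathGraph 4).Adj 0 1 by
        rw [SimpleGraph.pathGraph_adj]; decide))
      have e23 := hX (gs_rr.2 (show (SimpleGraph.pathGraph 4).Adj 2 3 by
        rw [SimpleGraph.pathGraph_adj]; decide))
      have h2 : 2 ≤ X.toRight.card := by
        rcases e01 with h | h <;> rcases e23 with h' | h' <;>
          exact Finset.one_lt_card.2
            ⟨_, Finset.mem_toRight.2 h, _, Finset.mem_toRight.2 h', by decide⟩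
      omega
    exact ⟨hTDS', hVC', (sInf_card_eq hTDS' hmin_t).symm, (sInf_card_eq hVC' hmin_c).symm⟩
  -- O₂ : attach a pendant vertex to u ∈ D
  · intro u hu
    obtain ⟨t, htD, htu⟩ := hTD u
    have hTDS' : IsTotalDomSet (graphSum T (⊥ : SimpleGraph Unit) u ()) (D.image Sum.inl) := by
      intro x
      cases x with
      | inl w =>
          obtain ⟨d, hd, hadj⟩ := hTD w
          exact ⟨Sum.inl d, Finset.mem_image_of_mem _ hd, gs_ll.2 hadj⟩
      | inr w =>
          exact ⟨Sum.inl u, Finset.mem_image_of_mem _ hu, gs_rl.2 ⟨rfl, rfl⟩⟩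
    have hVC' : _root_.IsVertexCover (graphSum T (⊥ : SimpleGraph Unit) u ()) (D.image Sum.inl) := by
      rintro (a | a) (b | b) hab
      · rcases hVC (gs_ll.1 hab) with h | h
        · exact Or.inl (Finset.mem_image_of_mem _ h)
        · exact Or.inr (Finset.mem_image_of_mem _ h)
      · obtain ⟨rfl, rfl⟩ := gs_lr.1 hab
        exact Or.inl (Finset.mem_image_of_mem _ hu)
      · obtain ⟨rfl, rfl⟩ := gs_rl.1 hab
        exact Or.inr (Finset.mem_image_of_mem _ hu)
      · exact absurd (gs_rr.1 hab) (by simp)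
    have hcard' : (D.image (Sum.inl : V → V ⊕ Unit)).card = D.card :=
      Finset.card_image_of_injective _ Sum.inl_injective
    have hmin_t : ∀ X : Finset (V ⊕ Unit),
        IsTotalDomSet (graphSum T (⊥ : SimpleGraph Unit) u ()) X →
        (D.image (Sum.inl : V → V ⊕ Unit)).card ≤ X.card := by
      intro X hX
      rw [hcard', card_split X]
      by_cases h : ∃ d ∈ X.toLeft, T.Adj u d
      · have := hgt _ (tds_toLeft hX h)
        omega
      · have h1 : Sum.inr () ∈ X := by
          rcases tds_left_dom hX u with hl | ⟨_, hr⟩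
          · exact absurd hl h
          · exact hr
        have h2 : 1 ≤ X.toRight.card :=
          Finset.card_pos.2 ⟨(), Finset.mem_toRight.2 h1⟩
        have h3 := hgt _ (tds_insert hX htu)
        have h4 : (insert t X.toLeft).card ≤ X.toLeft.card + 1 := Finset.card_insert_le _ _
        omega
    have hmin_c : ∀ X : Finset (V ⊕ Unit),
        _root_.IsVertexCover (graphSum T (⊥ : SimpleGraph Unit) u ()) X →
        (D.image (Sum.inl : V → V ⊕ Unit)).card ≤ X.card := by
      intro X hX
      rw [hcard', card_split X]
      have := hct _ (cover_toLeft hX)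
      omega
    exact ⟨hTDS', hVC', (sInf_card_eq hTDS' hmin_t).symm, (sInf_card_eq hVC' hmin_c).symm⟩
  -- O₃ : attach a path P₂ to u ∈ D, u not quasi-isolated
  · intro u hu hqi
    obtain ⟨t, htD, htu⟩ := hTD u
    have hcard' : ((D.image (Sum.inl : V → V ⊕ Fin 2)) ∪ {Sum.inr 0}).card = D.card + 1 := by
      rw [Finset.card_union_of_disjoint (by simp),
        Finset.card_image_of_injective _ Sum.inl_injective, Finset.card_singleton]
    have hTDS' : IsTotalDomSet (graphSum T (SimpleGraph.pathGraph 2) u 0)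
        (D.image Sum.inl ∪ {Sum.inr 0}) := by
      intro x
      cases x with
      | inl w =>
          obtain ⟨d, hd, hadj⟩ := hTD w
          exact ⟨Sum.inl d, by simp [hd], gs_ll.2 hadj⟩
      | inr w =>
          fin_cases w
          · exact ⟨Sum.inl u, by simp [hu], gs_rl.2 ⟨rfl, rfl⟩⟩
          · exact ⟨Sum.inr 0, by simp, gs_rr.2 (by rw [SimpleGraph.pathGraph_adj]; decide)⟩
    have hVC' : _root_.IsVertexCover (graphSum T (SimpleGraph.pathGraph 2) u 0)
        (D.image Sum.inl ∪ {Sum.inr 0}) := by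
      rintro (a | a) (b | b) hab
      · rcases hVC (gs_ll.1 hab) with h | h
        · exact Or.inl (by simp [h])
        · exact Or.inr (by simp [h])
      · obtain ⟨rfl, rfl⟩ := gs_lr.1 hab
        exact Or.inl (by simp [hu])
      · obtain ⟨rfl, rfl⟩ := gs_rl.1 hab
        exact Or.inr (by simp [hu])
      · have h := gs_rr.1 hab
        rw [SimpleGraph.pathGraph_adj] at h
        have h' : a = 0 ∨ b = 0 := by revert h; fin_cases a <;> fin_cases b <;> decide
        rcases h' with rfl | rfl
        · exact Or.inl (by simp)
        · exact Or.inr (by simp)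
    have hmin_t : ∀ X : Finset (V ⊕ Fin 2),
        IsTotalDomSet (graphSum T (SimpleGraph.pathGraph 2) u 0) X →
        ((D.image (Sum.inl : V → V ⊕ Fin 2)) ∪ {Sum.inr 0}).card ≤ X.card := by
      intro X hX
      rw [hcard', card_split X]
      have h0 : (0 : Fin 2) ∈ X.toRight := by
        obtain ⟨d, hd, hadj⟩ := hX (Sum.inr 1)
        cases d with
        | inl d => exact absurd (gs_rl.1 hadj).2 (by decide)
        | inr d =>
            have h := gs_rr.1 hadj
            rw [SimpleGraph.pathGraph_adj] at h
            have hd2 : d = 0 := by revert h; fin_cases d <;> decide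
            exact Finset.mem_toRight.2 (hd2 ▸ hd)
      have h2 : 1 ≤ X.toRight.card := Finset.card_pos.2 ⟨0, h0⟩
      rcases le_or_gt D.card X.toLeft.card with hc | hc
      · omega
      · by_cases h : ∃ d ∈ X.toLeft, T.Adj u d
        · exact absurd (hgt _ (tds_toLeft hX h)) (by omega)
        · exact absurd (quasi_of hX h htu hg hgt (by omega)) hqi
    have hmin_c : ∀ X : Finset (V ⊕ Fin 2),
        _root_.IsVertexCover (graphSum T (SimpleGraph.pathGraph 2) u 0) X →
        ((D.image (Sum.inl : V → V ⊕ Fin 2)) ∪ {Sum.inr 0}).card ≤ X.card := by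
      intro X hX
      rw [hcard', card_split X]
      have h1 := hct _ (cover_toLeft hX)
      have h2 : 1 ≤ X.toRight.card := by
        rcases hX (gs_rr.2 (show (SimpleGraph.pathGraph 2).Adj 0 1 by
          rw [SimpleGraph.pathGraph_adj]; decide)) with h | h
        · exact Finset.card_pos.2 ⟨_, Finset.mem_toRight.2 h⟩
        · exact Finset.card_pos.2 ⟨_, Finset.mem_toRight.2 h⟩
      omega
    exact ⟨hTDS', hVC', (sInf_card_eq hTDS' hmin_t).symm, (sInf_card_eq hVC' hmin_c).symm⟩
  -- O₄ : attach a path P₄ by its second vertex to u not quasi-isolated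
  · intro u hqi
    obtain ⟨t, htD, htu⟩ := hTD u
    have hcard' : ((D.image (Sum.inl : V → V ⊕ Fin 4)) ∪ {Sum.inr 1, Sum.inr 2}).card
        = D.card + 2 := by
      rw [Finset.card_union_of_disjoint (by simp),
        Finset.card_image_of_injective _ Sum.inl_injective,
        Finset.card_pair (by simp)]
    have hTDS' : IsTotalDomSet (graphSum T (SimpleGraph.pathGraph 4) u 1)
        (D.image Sum.inl ∪ {Sum.inr 1, Sum.inr 2}) := by
      intro x
      cases x with
      | inl w =>
          obtain ⟨d, hd, hadj⟩ := hTD w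
          exact ⟨Sum.inl d, by simp [hd], gs_ll.2 hadj⟩
      | inr w =>
          fin_cases w
          · exact ⟨Sum.inr 1, by simp, gs_rr.2 (by rw [SimpleGraph.pathGraph_adj]; decide)⟩
          · exact ⟨Sum.inr 2, by simp, gs_rr.2 (by rw [SimpleGraph.pathGraph_adj]; decide)⟩
          · exact ⟨Sum.inr 1, by simp, gs_rr.2 (by rw [SimpleGraph.pathGraph_adj]; decide)⟩
          · exact ⟨Sum.inr 2, by simp, gs_rr.2 (by rw [SimpleGraph.pathGraph_adj]; decide)⟩
    have hVC' : _root_.IsVertexCover (graphSum T (SimpleGraph.pathGraph 4) u 1)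
        (D.image Sum.inl ∪ {Sum.inr 1, Sum.inr 2}) := by
      rintro (a | a) (b | b) hab
      · rcases hVC (gs_ll.1 hab) with h | h
        · exact Or.inl (by simp [h])
        · exact Or.inr (by simp [h])
      · obtain ⟨rfl, rfl⟩ := gs_lr.1 hab
        exact Or.inr (by simp)
      · obtain ⟨rfl, rfl⟩ := gs_rl.1 hab
        exact Or.inl (by simp)
      · have h := gs_rr.1 hab
        rw [SimpleGraph.pathGraph_adj] at h
        have h' : a = 1 ∨ a = 2 ∨ b = 1 ∨ b = 2 := by revert h; fin_cases a <;> fin_cases b <;> decide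
        rcases h' with rfl | rfl | rfl | rfl
        · exact Or.inl (by simp)
        · exact Or.inl (by simp)
        · exact Or.inr (by simp)
        · exact Or.inr (by simp)
    have hmin_t : ∀ X : Finset (V ⊕ Fin 4),
        IsTotalDomSet (graphSum T (SimpleGraph.pathGraph 4) u 1) X →
        ((D.image (Sum.inl : V → V ⊕ Fin 4)) ∪ {Sum.inr 1, Sum.inr 2}).card ≤ X.card := by
      intro X hX
      rw [hcard', card_split X]
      have f1 : (1 : Fin 4) ∈ X.toRight := by
        obtain ⟨d, hd, hadj⟩ := hX (Sum.inr 0)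
        cases d with
        | inl d => exact absurd (gs_rl.1 hadj).2 (by decide)
        | inr d =>
            have h := gs_rr.1 hadj
            rw [SimpleGraph.pathGraph_adj] at h
            have hd2 : d = 1 := by revert h; fin_cases d <;> decide
            exact Finset.mem_toRight.2 (hd2 ▸ hd)
      have f2 : (2 : Fin 4) ∈ X.toRight := by
        obtain ⟨d, hd, hadj⟩ := hX (Sum.inr 3)
        cases d with
        | inl d => exact absurd (gs_rl.1 hadj).2 (by decide)
        | inr d =>
            have h := gs_rr.1 hadj
            rw [SimpleGraph.pathGraph_adj] at h
            have hd2 : d = 2 := by revert h; fin_cases d <;> decide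
            exact Finset.mem_toRight.2 (hd2 ▸ hd)
      have h2 : 2 ≤ X.toRight.card := Finset.one_lt_card.2 ⟨_, f1, _, f2, by decide⟩
      rcases le_or_gt D.card X.toLeft.card with hc | hc
      · omega
      · by_cases h : ∃ d ∈ X.toLeft, T.Adj u d
        · exact absurd (hgt _ (tds_toLeft hX h)) (by omega)
        · exact absurd (quasi_of hX h htu hg hgt (by omega)) hqi
    have hmin_c : ∀ X : Finset (V ⊕ Fin 4),
        _root_.IsVertexCover (graphSum T (SimpleGraph.pathGraph 4) u 1) X →
        ((D.image (Sum.inl : V → V ⊕ Fin 4)) ∪ {Sum.inr 1, Sum.inr 2}).card ≤ X.card := by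
      intro X hX
      rw [hcard', card_split X]
      have h1 := hct _ (cover_toLeft hX)
      have e01 := hX (gs_rr.2 (show (SimpleGraph.pathGraph 4).Adj 0 1 by
        rw [SimpleGraph.pathGraph_adj]; decide))
      have e23 := hX (gs_rr.2 (show (SimpleGraph.pathGraph 4).Adj 2 3 by
        rw [SimpleGraph.pathGraph_adj]; decide))
      have h2 : 2 ≤ X.toRight.card := by
        rcases e01 with h | h <;> rcases e23 with h' | h' <;>
          exact Finset.one_lt_card.2
            ⟨_, Finset.mem_toRight.2 h, _, Finset.mem_toRight.2 h', by decide⟩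
      omega
    exact ⟨hTDS', hVC', (sInf_card_eq hTDS' hmin_t).symm, (sInf_card_eq hVC' hmin_c).symm⟩
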